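/- Let N, K, Λ be positive natural numbers with Λ dividing K, let M_s, M_p be positive reals with M_s + M_p ≤ N, set L_1 := K/Λ, and suppose t_s := Λ M_s / N and t_p := L_1 M_p / (N(1 − M_s/N)) are natural numbers with 1 ≤ t_s ≤ Λ and t_p ≤ L_1. Then ( ∑_{n=1}^{Λ} C(Λ − n, t_s) · C(L_1, t_p + 1) ) / ( C(Λ, t_s) · C(L_1, t_p) ) = K (1 − (M_s + M_p)/N) / ((t_s + 1)(t_p + 1)). -/

import Mathlib

lemma sum_choose_aux (Λ ts : ℕ) (hΛ : 0 < Λ) :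
    ∑ n ∈ Finset.Icc 1 Λ, (Λ - n).choose ts = Λ.choose (ts + 1) := by
  have h12 : ∑ n ∈ Finset.Icc 1 Λ, (Λ - n).choose ts
      = ∑ i ∈ Finset.range Λ, i.choose ts := by
    apply Finset.sum_nbij' (fun n => Λ - n) (fun m => Λ - m)
    · intro a ha; simp only [Finset.mem_Icc, Finset.mem_range] at *; omega
    · intro a ha; simp only [Finset.mem_Icc, Finset.mem_range] at *; omega
    · intro a ha; simp only [Finset.mem_Icc] at ha; omega
    · intro a ha; simp only [Finset.mem_range] at ha; omega
    · intro a ha; rfl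
  have h3 : ∑ i ∈ Finset.range Λ, i.choose ts = Λ.choose (ts + 1) := by
    obtain ⟨m, hm⟩ := Nat.exists_eq_succ_of_ne_zero (Nat.pos_iff_ne_zero.mp hΛ)
    subst hm
    rw [← Nat.sum_Icc_choose m ts]
    apply (Finset.sum_subset _ _).symm
    · intro x hx
      simp only [Finset.mem_Icc, Finset.mem_range] at *
      omega
    · intro x hx hx'
      simp only [Finset.mem_Icc, Finset.mem_range] at *
      exact Nat.choose_eq_zero_of_lt (by omega)
  rw [h12, h3]

/-- Corollary 3 of the paper: for the uniform association profile
`L_1 = ⋯ = L_Λ = K/Λ`, the rate of Scheme 2 simplifies to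
`K(1 − (Ms+Mp)/N)/((ts+1)(tp+1))`. -/
theorem stmt8 (N K Λ : ℕ) (hN : 0 < N) (hK : 0 < K) (hΛ : 0 < Λ) (hdvd : Λ ∣ K)
    (Ms Mp : ℝ) (hMs : 0 < Ms) (hMp : 0 < Mp) (hsum : Ms + Mp ≤ (N : ℝ))
    (L1 : ℕ) (hL1 : L1 = K / Λ)
    (ts tp : ℕ)
    (hts : (ts : ℝ) = (Λ : ℝ) * Ms / (N : ℝ))
    (htp : (tp : ℝ) = (L1 : ℝ) * Mp / ((N : ℝ) * (1 - Ms / (N : ℝ))))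
    (hts1 : 1 ≤ ts) (htsΛ : ts ≤ Λ) (htpL : tp ≤ L1) :
    (∑ n ∈ Finset.Icc 1 Λ, (Nat.choose (Λ - n) ts : ℝ) * (Nat.choose L1 (tp + 1) : ℝ)) /
        ((Nat.choose Λ ts : ℝ) * (Nat.choose L1 tp : ℝ))
    = (K : ℝ) * (1 - (Ms + Mp) / (N : ℝ)) / (((ts : ℝ) + 1) * ((tp : ℝ) + 1)) := by
  have hNR : (0:ℝ) < N := by exact_mod_cast hN
  have hMsN : Ms < N := by linarith
  have hKΛ : Λ * L1 = K := by rw [hL1]; exact Nat.mul_div_cancel' hdvd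
  have hKΛ' : (Λ:ℝ) * (L1:ℝ) = K := by exact_mod_cast hKΛ
  -- rewrite the sum
  have hsum1 : (∑ n ∈ Finset.Icc 1 Λ, (Nat.choose (Λ - n) ts : ℝ) * (Nat.choose L1 (tp + 1) : ℝ))
      = (Nat.choose Λ (ts+1) : ℝ) * (Nat.choose L1 (tp + 1) : ℝ) := by
    rw [← Finset.sum_mul]
    congr 1
    rw [← Nat.cast_sum]
    exact_mod_cast congrArg (Nat.cast : ℕ → ℝ) (sum_choose_aux Λ ts hΛ)
  rw [hsum1]
  -- choose identities
  have h2 : (Nat.choose Λ (ts+1) : ℝ) * ((ts:ℝ)+1) = (Nat.choose Λ ts : ℝ) * ((Λ:ℝ) - ts) := by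
    have := Nat.choose_succ_right_eq Λ ts
    have h := congrArg (Nat.cast : ℕ → ℝ) this
    push_cast [Nat.cast_sub htsΛ] at h
    linarith [h]
  have h3 : (Nat.choose L1 (tp+1) : ℝ) * ((tp:ℝ)+1) = (Nat.choose L1 tp : ℝ) * ((L1:ℝ) - tp) := by
    have := Nat.choose_succ_right_eq L1 tp
    have h := congrArg (Nat.cast : ℕ → ℝ) this
    push_cast [Nat.cast_sub htpL] at h
    linarith [h]
  have hc1 : (0:ℝ) < (Nat.choose Λ ts : ℝ) := by exact_mod_cast Nat.choose_pos htsΛ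
  have hc2 : (0:ℝ) < (Nat.choose L1 tp : ℝ) := by exact_mod_cast Nat.choose_pos htpL
  have hts0 : (0:ℝ) < (ts:ℝ) + 1 := by positivity
  have htp0 : (0:ℝ) < (tp:ℝ) + 1 := by positivity
  have key : (Nat.choose Λ (ts+1) : ℝ) * (Nat.choose L1 (tp + 1) : ℝ) /
      ((Nat.choose Λ ts : ℝ) * (Nat.choose L1 tp : ℝ))
      = (((Λ:ℝ) - ts) * ((L1:ℝ) - tp)) / (((ts:ℝ)+1) * ((tp:ℝ)+1)) := by
    rw [div_eq_div_iff (by positivity) (by positivity)]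
    linear_combination ((Nat.choose L1 (tp+1) : ℝ) * ((tp:ℝ)+1)) * h2 +
      ((Nat.choose Λ ts : ℝ) * ((Λ:ℝ) - ts)) * h3
  rw [key]
  congr 1
  -- numerator identity
  have hNne : (N:ℝ) ≠ 0 := ne_of_gt hNR
  have hNMs : (N:ℝ) - Ms ≠ 0 := by linarith
  have h1ms : (1:ℝ) - Ms / N ≠ 0 := by
    rw [sub_ne_zero]
    intro h
    field_simp at h
    linarith
  rw [hts, htp]
  field_simp
  linear_combination ((N:ℝ) - Ms - Mp)*hKΛ'
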